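/- Let G be a locally finite simple graph on a vertex set V in which every vertex has positive degree, and let 𝓛 be its normalized Laplacian. Let (S_j)_{j∈J} be a family of subsets of V such that the closed sets S_j ∪ bS_j (each S_j together with its vertex boundary bS_j, the set of vertices outside S_j adjacent to a vertex of S_j) are pairwise disjoint. Suppose each S_j is a Λ_j-set and that Λ := sup_j Λ_j is finite. Then the union S = ⋃_j S_j is a Λ-set: for every φ : V → ℂ supported in S with ∑_{v∈V}|φ(v)|² and ∑_{v∈V}|(𝓛φ)(v)|² finite, ∑_{v∈V}|φ(v)|² ≤ Λ²·∑_{v∈V}|(𝓛φ)(v)|². -/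

import Mathlib

/-- The normalized Laplacian of a locally finite simple graph, acting on `f : V → ℂ`:
`(𝓛 f) v = f v − ∑_{u ∼ v} f u / √(d u · d v)`. -/
noncomputable def nLap {V : Type*} (G : SimpleGraph V) [G.LocallyFinite] (f : V → ℂ) (v : V) : ℂ :=
  f v - ∑ u ∈ G.neighborFinset v, f u / (Real.sqrt ((G.degree u : ℝ) * (G.degree v : ℝ)) : ℂ)

/-- The vertex boundary of a set of vertices: the vertices outside `S` adjacent to a vertex
of `S`. -/
def vertexBoundary {V : Type*} (G : SimpleGraph V) (S : Set V) : Set V :=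
  {v : V | v ∉ S ∧ ∃ u ∈ S, G.Adj v u}

/-- If the closures `S_j ∪ bS_j` are pairwise disjoint, each `S_j` is a `Λ_j`-set,
and `Λ = ⨆ j, Λ_j` is finite, then `⋃ j, S_j` is a `Λ`-set. -/
theorem union_of_lambda_sets {V : Type*} (G : SimpleGraph V) [G.LocallyFinite]
    (hdeg : ∀ v : V, 0 < G.degree v)
    {J : Type*} (S : J → Set V) (Λf : J → ℝ) (hΛpos : ∀ j, 0 < Λf j)
    (hdisj : ∀ i j : J, i ≠ j →
      Disjoint (S i ∪ vertexBoundary G (S i)) (S j ∪ vertexBoundary G (S j)))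
    (hset : ∀ j, ∀ φ : V → ℂ, (∀ v, v ∉ S j → φ v = 0) →
      Summable (fun v => ‖φ v‖ ^ 2) → Summable (fun v => ‖nLap G φ v‖ ^ 2) →
      Real.sqrt (∑' v, ‖φ v‖ ^ 2) ≤ Λf j * Real.sqrt (∑' v, ‖nLap G φ v‖ ^ 2))
    (hbdd : BddAbove (Set.range Λf))
    (φ : V → ℂ) (hsupp : ∀ v, v ∉ ⋃ j, S j → φ v = 0)
    (hsum1 : Summable fun v => ‖φ v‖ ^ 2)
    (hsum2 : Summable fun v => ‖nLap G φ v‖ ^ 2) :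
    (∑' v, ‖φ v‖ ^ 2) ≤ (⨆ j, Λf j) ^ 2 * ∑' v, ‖nLap G φ v‖ ^ 2 := by
  classical
  set Λ : ℝ := ⨆ j, Λf j with hΛdef
  set T : J → Set V := fun j => S j ∪ vertexBoundary G (S j) with hTdef
  set ψ : J → V → ℂ := fun j => (S j).indicator φ with hψdef
  -- membership of a vertex where φ is nonzero
  have hmem : ∀ v : V, φ v ≠ 0 → ∃ j, v ∈ S j := by
    intro v hv
    by_contra h
    push_neg at h
    exact hv (hsupp v (by simpa using h))
  -- key combinatorial identity
  have key : ∀ j v, nLap G (ψ j) v = (T j).indicator (nLap G φ) v := by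
    intro j v
    by_cases hvT : v ∈ T j
    · rw [Set.indicator_of_mem hvT]
      have hsumeq : ∀ u ∈ G.neighborFinset v, (S j).indicator φ u = φ u := by
        intro u hu
        have hadj : G.Adj v u := (G.mem_neighborFinset v u).mp hu
        by_cases huS : u ∈ S j
        · exact Set.indicator_of_mem huS _
        · -- u ∉ S j; show φ u = 0
          have hu0 : φ u = 0 := by
            by_contra hne
            obtain ⟨i, hi⟩ := hmem u hne
            have hij : i ≠ j := fun h => huS (h ▸ hi)
            -- u ∈ bS j or contradiction with disjointness
            rcases hvT with hvS | hvB
            · have hub : u ∈ vertexBoundary G (S j) := ⟨huS, v, hvS, hadj.symm⟩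
              exact (hdisj i j hij).ne_of_mem (Set.mem_union_left _ hi)
                (Set.mem_union_right _ hub) rfl
            · -- v ∈ bS j, so v ∉ S i; then v ∈ bS i, contradiction
              have hvSi : v ∉ S i := fun hvSi =>
                (hdisj i j hij).ne_of_mem (Set.mem_union_left _ hvSi)
                  (Set.mem_union_right _ hvB) rfl
              have hvBi : v ∈ vertexBoundary G (S i) := ⟨hvSi, u, hi, hadj⟩
              exact (hdisj i j hij).ne_of_mem (Set.mem_union_right _ hvBi)
                (Set.mem_union_right _ hvB) rfl
          rw [Set.indicator_of_notMem huS, hu0]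
      rcases hvT with hvS | hvB
      · simp only [nLap, hψdef, Set.indicator_of_mem hvS]
        congr 1
        exact Finset.sum_congr rfl fun u hu => by rw [hsumeq u hu]
      · have hv0 : φ v = 0 := by
          by_contra hne
          obtain ⟨i, hi⟩ := hmem v hne
          have hij : i ≠ j := fun h => hvB.1 (h ▸ hi)
          exact (hdisj i j hij).ne_of_mem (Set.mem_union_left _ hi)
            (Set.mem_union_right _ hvB) rfl
        simp only [nLap, hψdef, Set.indicator_of_notMem hvB.1, hv0]
        congr 1
        exact Finset.sum_congr rfl fun u hu => by rw [hsumeq u hu]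
    · rw [Set.indicator_of_notMem hvT]
      have hvS : v ∉ S j := fun h => hvT (Set.mem_union_left _ h)
      have hz : ∀ u ∈ G.neighborFinset v, (S j).indicator φ u = 0 := by
        intro u hu
        have hadj : G.Adj v u := (G.mem_neighborFinset v u).mp hu
        have huS : u ∉ S j := by
          intro huS
          exact hvT (Set.mem_union_right _ ⟨hvS, u, huS, hadj⟩)
        exact Set.indicator_of_notMem huS _
      simp only [nLap, hψdef, Set.indicator_of_notMem hvS]
      rw [Finset.sum_congr rfl (fun u hu => by rw [hz u hu]) ]
      simp
  -- S's pairwise disjoint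
  have hSdisj : ∀ i j : J, i ≠ j → Disjoint (S i) (S j) := fun i j h =>
    (hdisj i j h).mono Set.subset_union_left Set.subset_union_left
  have hTdisj : ∀ i j : J, i ≠ j → Disjoint (T i) (T j) := hdisj
  -- summability of the pieces
  have hψsum1 : ∀ j, Summable fun v => ‖ψ j v‖ ^ 2 := by
    intro j
    refine hsum1.of_nonneg_of_le (fun v => by positivity) fun v => ?_
    by_cases h : v ∈ S j
    · simp [hψdef, Set.indicator_of_mem h]
    · simp [hψdef, Set.indicator_of_notMem h]
  have hψsum2 : ∀ j, Summable fun v => ‖nLap G (ψ j) v‖ ^ 2 := by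
    intro j
    refine hsum2.of_nonneg_of_le (fun v => by positivity) fun v => ?_
    rw [key j v]
    by_cases h : v ∈ T j
    · simp [Set.indicator_of_mem h]
    · simp [Set.indicator_of_notMem h]
  -- Λ bounds
  have hΛnn : 0 ≤ Λ := by
    rcases isEmpty_or_nonempty J with hJ | hJ
    · simp [hΛdef, ciSup_of_empty]
    · exact le_trans (hΛpos (Classical.arbitrary J)).le (le_ciSup hbdd _)
  -- per-piece inequality
  have hpiece : ∀ j, (∑' v, ‖ψ j v‖ ^ 2) ≤ Λ ^ 2 * ∑' v, ‖nLap G (ψ j) v‖ ^ 2 := by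
    intro j
    have h := hset j (ψ j) (fun v hv => by simp [hψdef, Set.indicator_of_notMem hv])
      (hψsum1 j) (hψsum2 j)
    have ha : (0:ℝ) ≤ ∑' v, ‖ψ j v‖ ^ 2 := tsum_nonneg fun v => by positivity
    have hb : (0:ℝ) ≤ ∑' v, ‖nLap G (ψ j) v‖ ^ 2 := tsum_nonneg fun v => by positivity
    have hΛj : Λf j ≤ Λ := le_ciSup hbdd j
    calc (∑' v, ‖ψ j v‖ ^ 2) = Real.sqrt (∑' v, ‖ψ j v‖ ^ 2) ^ 2 := (Real.sq_sqrt ha).symm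
      _ ≤ (Λf j * Real.sqrt (∑' v, ‖nLap G (ψ j) v‖ ^ 2)) ^ 2 :=
          pow_le_pow_left₀ (Real.sqrt_nonneg _) h 2
      _ = Λf j ^ 2 * (∑' v, ‖nLap G (ψ j) v‖ ^ 2) := by
          rw [mul_pow, Real.sq_sqrt hb]
      _ ≤ Λ ^ 2 * (∑' v, ‖nLap G (ψ j) v‖ ^ 2) := by
          gcongr
          exact (hΛpos j).le
  -- move to ENNReal
  have P1 : ∀ v, (∑' j, ENNReal.ofReal (‖ψ j v‖ ^ 2)) = ENNReal.ofReal (‖φ v‖ ^ 2) := by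
    intro v
    by_cases h : ∃ j0, v ∈ S j0
    · obtain ⟨j0, hj0⟩ := h
      rw [tsum_eq_single j0 (fun j hj => by
        have : v ∉ S j := fun hv => (hSdisj j j0 hj).ne_of_mem hv hj0 rfl
        simp [hψdef, Set.indicator_of_notMem this])]
      simp [hψdef, Set.indicator_of_mem hj0]
    · push_neg at h
      have hv0 : φ v = 0 := hsupp v (by simpa using h)
      have : ∀ j, ψ j v = 0 := fun j => by simp [hψdef, Set.indicator_of_notMem (h j)]
      simp [this, hv0]
  have P2 : ∀ v, (∑' j, ENNReal.ofReal (‖nLap G (ψ j) v‖ ^ 2))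
      ≤ ENNReal.ofReal (‖nLap G φ v‖ ^ 2) := by
    intro v
    by_cases h : ∃ j0, v ∈ T j0
    · obtain ⟨j0, hj0⟩ := h
      rw [tsum_eq_single j0 (fun j hj => by
        have : v ∉ T j := fun hv => (hTdisj j j0 hj).ne_of_mem hv hj0 rfl
        rw [key j v]
        simp [Set.indicator_of_notMem this])]
      rw [key j0 v, Set.indicator_of_mem hj0]
    · push_neg at h
      have : ∀ j, nLap G (ψ j) v = 0 := fun j => by
        rw [key j v]; exact Set.indicator_of_notMem (h j) _
      simp [this]
  have hA : ENNReal.ofReal (∑' v, ‖φ v‖ ^ 2) = ∑' v, ENNReal.ofReal (‖φ v‖ ^ 2) :=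
    ENNReal.ofReal_tsum_of_nonneg (fun v => by positivity) hsum1
  have hB : ENNReal.ofReal (∑' v, ‖nLap G φ v‖ ^ 2)
      = ∑' v, ENNReal.ofReal (‖nLap G φ v‖ ^ 2) :=
    ENNReal.ofReal_tsum_of_nonneg (fun v => by positivity) hsum2
  have main : ENNReal.ofReal (∑' v, ‖φ v‖ ^ 2)
      ≤ ENNReal.ofReal (Λ ^ 2 * ∑' v, ‖nLap G φ v‖ ^ 2) := by
    calc ENNReal.ofReal (∑' v, ‖φ v‖ ^ 2)
        = ∑' v, ENNReal.ofReal (‖φ v‖ ^ 2) := hA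
      _ = ∑' v, ∑' j, ENNReal.ofReal (‖ψ j v‖ ^ 2) := by
          exact tsum_congr fun v => (P1 v).symm
      _ = ∑' j, ∑' v, ENNReal.ofReal (‖ψ j v‖ ^ 2) := ENNReal.tsum_comm
      _ = ∑' j, ENNReal.ofReal (∑' v, ‖ψ j v‖ ^ 2) := by
          exact tsum_congr fun j =>
            (ENNReal.ofReal_tsum_of_nonneg (fun v => by positivity) (hψsum1 j)).symm
      _ ≤ ∑' j, ENNReal.ofReal (Λ ^ 2 * ∑' v, ‖nLap G (ψ j) v‖ ^ 2) :=
          ENNReal.tsum_le_tsum fun j => ENNReal.ofReal_le_ofReal (hpiece j)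
      _ = ∑' j, ENNReal.ofReal (Λ ^ 2) * ENNReal.ofReal (∑' v, ‖nLap G (ψ j) v‖ ^ 2) := by
          exact tsum_congr fun j => ENNReal.ofReal_mul (by positivity)
      _ = ENNReal.ofReal (Λ ^ 2) * ∑' j, ENNReal.ofReal (∑' v, ‖nLap G (ψ j) v‖ ^ 2) :=
          ENNReal.tsum_mul_left
      _ = ENNReal.ofReal (Λ ^ 2) * ∑' j, ∑' v, ENNReal.ofReal (‖nLap G (ψ j) v‖ ^ 2) := by
          rw [tsum_congr fun j =>
            ENNReal.ofReal_tsum_of_nonneg (fun v => by positivity) (hψsum2 j)]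
      _ = ENNReal.ofReal (Λ ^ 2) * ∑' v, ∑' j, ENNReal.ofReal (‖nLap G (ψ j) v‖ ^ 2) := by
          rw [ENNReal.tsum_comm]
      _ ≤ ENNReal.ofReal (Λ ^ 2) * ∑' v, ENNReal.ofReal (‖nLap G φ v‖ ^ 2) := by
          exact mul_le_mul_right (ENNReal.tsum_le_tsum P2) _
      _ = ENNReal.ofReal (Λ ^ 2) * ENNReal.ofReal (∑' v, ‖nLap G φ v‖ ^ 2) := by rw [hB]
      _ = ENNReal.ofReal (Λ ^ 2 * ∑' v, ‖nLap G φ v‖ ^ 2) :=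
          (ENNReal.ofReal_mul (by positivity)).symm
  have hBnn : (0:ℝ) ≤ Λ ^ 2 * ∑' v, ‖nLap G φ v‖ ^ 2 := by
    have : (0:ℝ) ≤ ∑' v, ‖nLap G φ v‖ ^ 2 := tsum_nonneg (fun v => by positivity : ∀ v, (0:ℝ) ≤ ‖nLap G φ v‖ ^ 2)
    positivity
  exact (ENNReal.ofReal_le_ofReal_iff hBnn).mp main
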